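/- Under the LATE assumptions (without EMCO), the reduced-form effect of Z on Y·1(D=d) for d > 0 decomposes as: E[Y·1(D=d)|Z=1] − E[Y·1(D=d)|Z=0] = E[Y(d)|D(1)=d>D(0)=0]·P(D(1)=d>D(0)=0) + E[Y(d)|D(1)=d>D(0)>0]·P(D(1)=d>D(0)>0) − E[Y(d)|D(1)>D(0)=d]·P(D(1)>D(0)=d), where terms with zero-probability conditioning events are interpreted as 0. -/

import Mathlib

open MeasureTheory ProbabilityTheory

variable {Ω : Type*}

/-- probability of a set -/
noncomputable def pr [MeasurableSpace Ω] (μ : MeasureTheory.Measure Ω) (A : Set Ω) : ℝ :=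
  (μ A).toReal

/-- conditional probability P(A | B) -/
noncomputable def cP [MeasurableSpace Ω] (μ : MeasureTheory.Measure Ω) (A B : Set Ω) : ℝ :=
  pr μ (A ∩ B) / pr μ B

/-- conditional expectation E[f | B] -/
noncomputable def cE [MeasurableSpace Ω] (μ : MeasureTheory.Measure Ω) (f : Ω → ℝ) (B : Set Ω) : ℝ :=
  (∫ ω in B, f ω ∂μ) / pr μ B

/-- observed treatment D = Z·D(1) + (1−Z)·D(0) -/
def obsD (Z D0 D1 : Ω → ℕ) : Ω → ℕ := fun ω => if Z ω = 1 then D1 ω else D0 ω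

/-- observed outcome Y = Y(D) -/
noncomputable def obsY (Z D0 D1 : Ω → ℕ) (Yp : ℕ → Ω → ℝ) : Ω → ℝ :=
  fun ω => Yp (obsD Z D0 D1 ω) ω

lemma cE_mul_pr [MeasurableSpace Ω] (μ : Measure Ω) [IsFiniteMeasure μ] (f : Ω → ℝ) (B : Set Ω) :
    cE μ f B * pr μ B = ∫ ω in B, f ω ∂μ := by
  rcases eq_or_ne (pr μ B) 0 with h | h
  · have hμB : μ B = 0 := by
      rw [pr] at h
      rcases (ENNReal.toReal_eq_zero_iff (μ B)).mp h with h2 | h2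
      · exact h2
      · exact absurd h2 (measure_ne_top μ B)
    rw [h, mul_zero, Measure.restrict_eq_zero.mpr hμB, integral_zero_measure]
  · rw [cE, div_mul_cancel₀ _ h]

/-- decomposition of the reduced-form effect of Z on Y·1(D=d) under
LATE (without EMCO); conditional expectations given null events are 0 by
convention (division by zero). -/
theorem reduced_form_decomposition
    [MeasurableSpace Ω] (μ : MeasureTheory.Measure Ω) [IsProbabilityMeasure μ]
    (Dbar : ℕ) (Z D0 D1 : Ω → ℕ) (Yp : ℕ → Ω → ℝ)
    (hZ01 : ∀ ω, Z ω = 0 ∨ Z ω = 1)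
    (hZm : Measurable Z) (hD0m : Measurable D0) (hD1m : Measurable D1)
    (hD0b : ∀ ω, D0 ω ≤ Dbar) (hD1b : ∀ ω, D1 ω ≤ Dbar)
    (hYm : ∀ d, Measurable (Yp d)) (hYint : ∀ d, Integrable (Yp d) μ)
    (hindep : IndepFun (fun ω => (D0 ω, D1 ω, fun d => Yp d ω)) Z μ)
    (hmono : ∀ᵐ ω ∂μ, D0 ω ≤ D1 ω)
    (hZ1pos : 0 < pr μ {ω | Z ω = 1}) (hZ1lt : pr μ {ω | Z ω = 1} < 1)
    (d : ℕ) (hd : 0 < d) (hdD : d ≤ Dbar) :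
    cE μ (fun ω => if obsD Z D0 D1 ω = d then obsY Z D0 D1 Yp ω else 0) {ω | Z ω = 1} -
      cE μ (fun ω => if obsD Z D0 D1 ω = d then obsY Z D0 D1 Yp ω else 0) {ω | Z ω = 0} =
    cE μ (Yp d) {ω | D1 ω = d ∧ D0 ω = 0} * pr μ {ω | D1 ω = d ∧ D0 ω = 0} +
      cE μ (Yp d) {ω | D1 ω = d ∧ 0 < D0 ω ∧ D0 ω < d} *
        pr μ {ω | D1 ω = d ∧ 0 < D0 ω ∧ D0 ω < d} -
      cE μ (Yp d) {ω | d < D1 ω ∧ D0 ω = d} * pr μ {ω | d < D1 ω ∧ D0 ω = d} := by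
  -- measurable sets built from (D0, D1)
  have mset : ∀ s : Set (ℕ × ℕ), MeasurableSet {ω | (D0 ω, D1 ω) ∈ s} := fun s =>
    (hD0m.prodMk hD1m) ((Set.to_countable s).measurableSet)
  have mZ1 : MeasurableSet {ω | Z ω = 1} := hZm (measurableSet_singleton 1)
  have mZ0 : MeasurableSet {ω | Z ω = 0} := hZm (measurableSet_singleton 0)
  have mD1d : MeasurableSet {ω | D1 ω = d} := mset {p | p.2 = d}
  have mD0d : MeasurableSet {ω | D0 ω = d} := mset {p | p.1 = d}
  have mA : MeasurableSet {ω | D1 ω = d ∧ D0 ω = 0} := mset {p | p.2 = d ∧ p.1 = 0}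
  have mB : MeasurableSet {ω | D1 ω = d ∧ 0 < D0 ω ∧ D0 ω < d} :=
    mset {p | p.2 = d ∧ 0 < p.1 ∧ p.1 < d}
  have mC : MeasurableSet {ω | d < D1 ω ∧ D0 ω = d} := mset {p | d < p.2 ∧ p.1 = d}
  have mM : MeasurableSet {ω | D1 ω = d ∧ D0 ω = d} := mset {p | p.2 = d ∧ p.1 = d}
  -- reduced-form integrands
  set g1 : Ω → ℝ := fun ω => if D1 ω = d then Yp d ω else 0 with hg1
  set g0 : Ω → ℝ := fun ω => if D0 ω = d then Yp d ω else 0 with hg0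
  have hg1ind : g1 = Set.indicator {ω | D1 ω = d} (Yp d) := by
    ext ω; simp [hg1, Set.indicator_apply]
  have hg0ind : g0 = Set.indicator {ω | D0 ω = d} (Yp d) := by
    ext ω; simp [hg0, Set.indicator_apply]
  have intg1 : Integrable g1 μ := hg1ind ▸ (hYint d).indicator mD1d
  have intg0 : Integrable g0 μ := hg0ind ▸ (hYint d).indicator mD0d
  -- indicator of Z
  set W1 : Ω → ℝ := fun ω => if Z ω = 1 then 1 else 0 with hW1
  set W0 : Ω → ℝ := fun ω => if Z ω = 0 then 1 else 0 with hW0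
  have intW1 : Integrable W1 μ := by
    have : W1 = Set.indicator {ω | Z ω = 1} (fun _ => (1:ℝ)) := by
      ext ω; simp [hW1, Set.indicator_apply]
    rw [this]; exact (integrable_const 1).indicator mZ1
  have intW0 : Integrable W0 μ := by
    have : W0 = Set.indicator {ω | Z ω = 0} (fun _ => (1:ℝ)) := by
      ext ω; simp [hW0, Set.indicator_apply]
    rw [this]; exact (integrable_const 1).indicator mZ0
  -- independence of g_i and W_j
  have hφ1 : Measurable (fun p : ℕ × ℕ × (ℕ → ℝ) => if p.2.1 = d then p.2.2 d else 0) := by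
    apply Measurable.ite
    · exact (measurable_fst.comp measurable_snd) (measurableSet_singleton d)
    · exact (measurable_pi_apply d).comp (measurable_snd.comp measurable_snd)
    · exact measurable_const
  have hφ0 : Measurable (fun p : ℕ × ℕ × (ℕ → ℝ) => if p.1 = d then p.2.2 d else 0) := by
    apply Measurable.ite
    · exact measurable_fst (measurableSet_singleton d)
    · exact (measurable_pi_apply d).comp (measurable_snd.comp measurable_snd)
    · exact measurable_const
  have hψ1 : Measurable (fun n : ℕ => if n = 1 then (1:ℝ) else 0) := measurable_from_top
  have hψ0 : Measurable (fun n : ℕ => if n = 0 then (1:ℝ) else 0) := measurable_from_top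
  have hInd1 : IndepFun g1 W1 μ := hindep.comp hφ1 hψ1
  have hInd0 : IndepFun g0 W0 μ := hindep.comp hφ0 hψ0
  -- ∫ W_j = pr {Z = j}
  have hintW1val : ∫ ω, W1 ω ∂μ = pr μ {ω | Z ω = 1} := by
    have : W1 = Set.indicator {ω | Z ω = 1} (fun _ => (1:ℝ)) := by
      ext ω; simp [hW1, Set.indicator_apply]
    rw [this, integral_indicator mZ1, setIntegral_const, smul_eq_mul, mul_one]; rfl
  have hintW0val : ∫ ω, W0 ω ∂μ = pr μ {ω | Z ω = 0} := by
    have : W0 = Set.indicator {ω | Z ω = 0} (fun _ => (1:ℝ)) := by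
      ext ω; simp [hW0, Set.indicator_apply]
    rw [this, integral_indicator mZ0, setIntegral_const, smul_eq_mul, mul_one]; rfl
  -- key factorization
  have key1 : ∫ ω in {ω | Z ω = 1}, g1 ω ∂μ = (∫ ω, g1 ω ∂μ) * pr μ {ω | Z ω = 1} := by
    have h1 : ∫ ω in {ω | Z ω = 1}, g1 ω ∂μ = ∫ ω, (g1 * W1) ω ∂μ := by
      rw [← integral_indicator mZ1]
      congr 1; ext ω
      by_cases h : Z ω = 1 <;> simp [Set.indicator_apply, h, hW1]
    rw [h1, hInd1.integral_mul_eq_mul_integral intg1.aestronglyMeasurable intW1.aestronglyMeasurable, hintW1val]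
  have key0 : ∫ ω in {ω | Z ω = 0}, g0 ω ∂μ = (∫ ω, g0 ω ∂μ) * pr μ {ω | Z ω = 0} := by
    have h1 : ∫ ω in {ω | Z ω = 0}, g0 ω ∂μ = ∫ ω, (g0 * W0) ω ∂μ := by
      rw [← integral_indicator mZ0]
      congr 1; ext ω
      by_cases h : Z ω = 0 <;> simp [Set.indicator_apply, h, hW0]
    rw [h1, hInd0.integral_mul_eq_mul_integral intg0.aestronglyMeasurable intW0.aestronglyMeasurable, hintW0val]
  -- pr {Z = 0} > 0
  have hZ0compl : {ω | Z ω = 0} = {ω | Z ω = 1}ᶜ := by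
    ext ω; simp only [Set.mem_setOf_eq, Set.mem_compl_iff]
    rcases hZ01 ω with h | h <;> simp [h]
  have hprZ0 : pr μ {ω | Z ω = 0} = 1 - pr μ {ω | Z ω = 1} := by
    rw [hZ0compl, pr, pr, measure_compl mZ1 (measure_ne_top μ _), measure_univ,
      ENNReal.toReal_sub_of_le prob_le_one ENNReal.one_ne_top, ENNReal.toReal_one]
  have hZ0pos : 0 < pr μ {ω | Z ω = 0} := by rw [hprZ0]; linarith
  -- on {Z = j} the observed integrand equals g_j
  have hfeq1 : Set.EqOn (fun ω => if obsD Z D0 D1 ω = d then obsY Z D0 D1 Yp ω else 0) g1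
      {ω | Z ω = 1} := by
    intro ω hω
    have hz : Z ω = 1 := hω
    simp only [hg1, obsY, obsD, hz, if_true]
    split_ifs with h
    · rw [h]
    · rfl
  have hfeq0 : Set.EqOn (fun ω => if obsD Z D0 D1 ω = d then obsY Z D0 D1 Yp ω else 0) g0
      {ω | Z ω = 0} := by
    intro ω hω
    have hz : Z ω = 0 := hω
    have hz1 : ¬ Z ω = 1 := by rw [hz]; omega
    simp only [hg0, obsY, obsD, hz1, if_false]
    split_ifs with h
    · rw [h]
    · rfl
  -- LHS = ∫ g1 − ∫ g0
  have hcE1 : cE μ (fun ω => if obsD Z D0 D1 ω = d then obsY Z D0 D1 Yp ω else 0)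
      {ω | Z ω = 1} = ∫ ω, g1 ω ∂μ := by
    rw [cE, setIntegral_congr_fun mZ1 hfeq1, key1, mul_div_assoc,
      div_self (ne_of_gt hZ1pos), mul_one]
  have hcE0 : cE μ (fun ω => if obsD Z D0 D1 ω = d then obsY Z D0 D1 Yp ω else 0)
      {ω | Z ω = 0} = ∫ ω, g0 ω ∂μ := by
    rw [cE, setIntegral_congr_fun mZ0 hfeq0, key0, mul_div_assoc,
      div_self (ne_of_gt hZ0pos), mul_one]
  -- ∫ g_j as set integrals
  have hg1int : ∫ ω, g1 ω ∂μ = ∫ ω in {ω | D1 ω = d}, Yp d ω ∂μ := by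
    rw [hg1ind, integral_indicator mD1d]
  have hg0int : ∫ ω, g0 ω ∂μ = ∫ ω in {ω | D0 ω = d}, Yp d ω ∂μ := by
    rw [hg0ind, integral_indicator mD0d]
  -- decompositions of the sets a.e.
  have hdec1 : ∫ ω in {ω | D1 ω = d}, Yp d ω ∂μ =
      (∫ ω in {ω | D1 ω = d ∧ D0 ω = 0}, Yp d ω ∂μ) +
      (∫ ω in {ω | D1 ω = d ∧ 0 < D0 ω ∧ D0 ω < d}, Yp d ω ∂μ) +
      (∫ ω in {ω | D1 ω = d ∧ D0 ω = d}, Yp d ω ∂μ) := by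
    have hae : {ω | D1 ω = d} =ᵐ[μ] (({ω | D1 ω = d ∧ D0 ω = 0} ∪
        {ω | D1 ω = d ∧ 0 < D0 ω ∧ D0 ω < d} ∪ {ω | D1 ω = d ∧ D0 ω = d} : Set Ω)) := by
      rw [Filter.eventuallyEq_set]
      filter_upwards [hmono] with ω hω
      simp only [Set.mem_setOf_eq, Set.mem_union]
      omega
    rw [setIntegral_congr_set hae, setIntegral_union _ mM ((hYint d).integrableOn)
      ((hYint d).integrableOn), setIntegral_union _ mB ((hYint d).integrableOn)
      ((hYint d).integrableOn)]
    · intro s hs1 hs2 ω hω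
      have h1 := hs1 hω; have h2 := hs2 hω
      simp only [Set.mem_setOf_eq] at h1 h2
      omega
    · intro s hs1 hs2 ω hω
      have h1 := hs1 hω; have h2 := hs2 hω
      simp only [Set.mem_union, Set.mem_setOf_eq] at h1 h2
      rcases h1 with h1 | h1 <;> omega
  have hdec0 : ∫ ω in {ω | D0 ω = d}, Yp d ω ∂μ =
      (∫ ω in {ω | D1 ω = d ∧ D0 ω = d}, Yp d ω ∂μ) +
      (∫ ω in {ω | d < D1 ω ∧ D0 ω = d}, Yp d ω ∂μ) := by
    have hae : {ω | D0 ω = d} =ᵐ[μ] (({ω | D1 ω = d ∧ D0 ω = d} ∪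
        {ω | d < D1 ω ∧ D0 ω = d} : Set Ω)) := by
      rw [Filter.eventuallyEq_set]
      filter_upwards [hmono] with ω hω
      simp only [Set.mem_setOf_eq, Set.mem_union]
      omega
    rw [setIntegral_congr_set hae, setIntegral_union _ mC ((hYint d).integrableOn)
      ((hYint d).integrableOn)]
    intro s hs1 hs2 ω hω
    have h1 := hs1 hω; have h2 := hs2 hω
    simp only [Set.mem_setOf_eq] at h1 h2
    omega
  -- put everything together
  rw [hcE1, hcE0, hg1int, hg0int, hdec1, hdec0, cE_mul_pr, cE_mul_pr, cE_mul_pr]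
  ring
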